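/- If N is a closed normal subgroup of a topological group G such that both N (with the subspace topology) and the quotient G/N are Roelcke precompact, then G is Roelcke precompact. -/

import Mathlib

open Pointwise

/-- A topological group is Roelcke precompact if for every neighborhood `U` of the identity
there is a finite set `F` with `G = U F U`. -/
def RoelckePrecompact (G : Type*) [Group G] [TopologicalSpace G] : Prop :=
  ∀ U ∈ nhds (1 : G), ∃ F : Finset G, U * (F : Set G) * U = Set.univ

theorem roelckePrecompact_of_extension {G : Type*} [Group G] [TopologicalSpace G]
    [IsTopologicalGroup G] (N : Subgroup G) [N.Normal] (hclosed : IsClosed (N : Set G))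
    (hN : RoelckePrecompact N) (hQ : RoelckePrecompact (G ⧸ N)) :
    RoelckePrecompact G := by
  classical
  intro U hU
  obtain ⟨V, hVopen, h1V, hVU⟩ := exists_open_nhds_one_mul_subset hU
  have hVnhds : V ∈ nhds (1 : G) := hVopen.mem_nhds h1V
  have hπV : (QuotientGroup.mk '' V : Set (G ⧸ N)) ∈ nhds (1 : G ⧸ N) := by
    have hop : IsOpen (QuotientGroup.mk '' V : Set (G ⧸ N)) :=
      QuotientGroup.isOpenMap_coe V hVopen
    exact hop.mem_nhds ⟨1, h1V, QuotientGroup.mk_one N⟩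
  obtain ⟨Fq, hFq⟩ := hQ _ hπV
  have hS : ∀ f : G, {n : N | f * (n : G) * f⁻¹ ∈ V ∧ (n : G) ∈ V} ∈ nhds (1 : N) := by
    intro f
    have h1 : (fun n : N => f * (n : G) * f⁻¹) ⁻¹' V ∈ nhds (1 : N) := by
      apply ContinuousAt.preimage_mem_nhds
      · exact ((continuous_const.mul continuous_subtype_val).mul continuous_const).continuousAt
      · simpa using hVnhds
    have h2 : (Subtype.val : N → G) ⁻¹' V ∈ nhds (1 : N) :=
      continuous_subtype_val.continuousAt.preimage_mem_nhds (by simpa using hVnhds)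
    exact Filter.inter_mem h1 h2
  choose E hE using fun f : G => hN _ (hS f)
  refine ⟨(Fq.image Quotient.out).biUnion fun f => (E f).image fun n : N => f * (n : G), ?_⟩
  rw [Set.eq_univ_iff_forall]
  intro g
  -- decompose the image of `g` in the quotient
  have hgmem : (QuotientGroup.mk g : G ⧸ N) ∈
      (QuotientGroup.mk '' V : Set (G ⧸ N)) * (Fq : Set (G ⧸ N)) * (QuotientGroup.mk '' V) := by
    rw [hFq]; exact Set.mem_univ _
  obtain ⟨x, hx, y, hy, hxy⟩ := Set.mem_mul.1 hgmem
  obtain ⟨p, hp, q, hq, hpq⟩ := Set.mem_mul.1 hx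
  obtain ⟨v1, hv1, rfl⟩ := hp
  obtain ⟨v2, hv2, rfl⟩ := hy
  set f : G := q.out with hfdef
  have hqf : (QuotientGroup.mk f : G ⧸ N) = q := q.out_eq
  have hmk : (QuotientGroup.mk (v1 * f * v2) : G ⧸ N) = QuotientGroup.mk g := by
    rw [← hxy, ← hpq, ← hqf]
    rfl
  have hn0 : (v1 * f * v2)⁻¹ * g ∈ N := QuotientGroup.eq.1 hmk
  set n0 : G := (v1 * f * v2)⁻¹ * g with hn0def
  have hg : v1 * f * v2 * n0 = g := by
    rw [hn0def]; group
  have hn : v2 * n0 * v2⁻¹ ∈ N := Subgroup.Normal.conj_mem ‹N.Normal› n0 hn0 v2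
  have hnn : (⟨v2 * n0 * v2⁻¹, hn⟩ : N) ∈
      {n : N | f * (n : G) * f⁻¹ ∈ V ∧ (n : G) ∈ V} * ↑(E f) *
        {n : N | f * (n : G) * f⁻¹ ∈ V ∧ (n : G) ∈ V} := by
    rw [hE f]; exact Set.mem_univ _
  obtain ⟨ab, hab, b, hb, habb⟩ := Set.mem_mul.1 hnn
  obtain ⟨a, ha, e, he, hae⟩ := Set.mem_mul.1 hab
  have key : (↑a * ↑e * ↑b : G) = v2 * n0 * v2⁻¹ := by
    have : ((a * e * b : N) : G) = v2 * n0 * v2⁻¹ := by rw [hae, habb]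
    simpa using this
  refine ⟨v1 * (f * ↑a * f⁻¹) * (f * ↑e),
    ⟨v1 * (f * ↑a * f⁻¹), hVU (Set.mul_mem_mul hv1 ha.1), f * ↑e, ?_, rfl⟩,
    ↑b * v2, hVU (Set.mul_mem_mul hb.2 hv2), ?_⟩
  · refine Finset.mem_coe.2 (Finset.mem_biUnion.2 ⟨f, ?_, ?_⟩)
    · exact Finset.mem_image.2 ⟨q, hq, rfl⟩
    · exact Finset.mem_image.2 ⟨e, he, rfl⟩
  · show v1 * (f * ↑a * f⁻¹) * (f * ↑e) * (↑b * v2) = g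
    have step : v1 * (f * ↑a * f⁻¹) * (f * ↑e) * (↑b * v2) =
        v1 * f * ((↑a : G) * ↑e * ↑b) * v2 := by group
    rw [step, key, ← hg]
    group
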